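/- Let s > 0, let K : [-s, 0] → ℝ be continuous with K(r) ≤ 0 for all r ∈ [-s, 0], and let h : [-s, 0] → ℝ be twice continuously differentiable with h''(r) + K(r)h(r) = 0 on [-s, 0], h(-s) = 0, and h(0) = 1. Then 0 ≤ h(r) ≤ 1 + r/s for all r ∈ [-s, 0], and 0 ≤ h'(-s) ≤ 1/s. -/

import Mathlib

/-- For the scalar Jacobi equation `h'' + Kh = 0` with nonpositive potential on `[-s, 0]`,
the solution with `h(-s) = 0` and `h(0) = 1` satisfies `0 ≤ h(r) ≤ 1 + r/s`
and `0 ≤ h'(-s) ≤ 1/s`. -/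
theorem stmt_7 (s : ℝ) (hs : 0 < s) (K h h' h'' : ℝ → ℝ)
    (hK : ContinuousOn K (Set.Icc (-s) 0))
    (hKneg : ∀ r ∈ Set.Icc (-s) 0, K r ≤ 0)
    (hh : ∀ r ∈ Set.Icc (-s) 0, HasDerivWithinAt h (h' r) (Set.Icc (-s) 0) r)
    (hh' : ∀ r ∈ Set.Icc (-s) 0, HasDerivWithinAt h' (h'' r) (Set.Icc (-s) 0) r)
    (hh'' : ContinuousOn h'' (Set.Icc (-s) 0))
    (heq : ∀ r ∈ Set.Icc (-s) 0, h'' r + K r * h r = 0)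
    (hend : h (-s) = 0) (h0 : h 0 = 1) :
    (∀ r ∈ Set.Icc (-s) 0, 0 ≤ h r ∧ h r ≤ 1 + r / s) ∧
      0 ≤ h' (-s) ∧ h' (-s) ≤ 1 / s := by
  have hsI : (-s) ∈ Set.Icc (-s) 0 := ⟨le_refl _, neg_nonpos.2 hs.le⟩
  have h0I : (0 : ℝ) ∈ Set.Icc (-s) 0 := ⟨neg_nonpos.2 hs.le, le_refl _⟩
  have hcont : ContinuousOn h (Set.Icc (-s) 0) :=
    fun r hr => (hh r hr).continuousWithinAt
  have hderiv2 : ∀ r ∈ Set.Icc (-s) 0, h'' r = -(K r * h r) := by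
    intro r hr
    have := heq r hr
    linarith
  -- Step 1: nonnegativity of h
  have hnonneg : ∀ r ∈ Set.Icc (-s) 0, 0 ≤ h r := by
    by_contra hcon
    push_neg at hcon
    obtain ⟨r0, hr0I, hr0⟩ := hcon
    -- zeros to the left of r0
    have hAclosed : IsClosed (Set.Icc (-s) r0 ∩ h ⁻¹' {0}) :=
      ContinuousOn.preimage_isClosed_of_isClosed
        (hcont.mono (Set.Icc_subset_Icc le_rfl hr0I.2)) isClosed_Icc isClosed_singleton
    have hAcomp : IsCompact (Set.Icc (-s) r0 ∩ h ⁻¹' {0}) :=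
      (isCompact_Icc (a := -s) (b := r0)).of_isClosed_subset hAclosed
        Set.inter_subset_left
    have hAne : (Set.Icc (-s) r0 ∩ h ⁻¹' {0}).Nonempty :=
      ⟨-s, ⟨le_refl _, hr0I.1⟩, by simpa using hend⟩
    obtain ⟨haIcc, haz⟩ := hAcomp.sSup_mem hAne
    set a := sSup (Set.Icc (-s) r0 ∩ h ⁻¹' {0}) with ha_def
    have haz' : h a = 0 := haz
    -- zeros to the right of r0
    have hBclosed : IsClosed (Set.Icc r0 0 ∩ h ⁻¹' {0}) :=
      ContinuousOn.preimage_isClosed_of_isClosed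
        (hcont.mono (Set.Icc_subset_Icc hr0I.1 le_rfl)) isClosed_Icc isClosed_singleton
    have hBcomp : IsCompact (Set.Icc r0 0 ∩ h ⁻¹' {0}) :=
      (isCompact_Icc (a := r0) (b := 0)).of_isClosed_subset hBclosed
        Set.inter_subset_left
    have hBne : (Set.Icc r0 0 ∩ h ⁻¹' {0}).Nonempty := by
      have hsub : Set.Icc (h r0) (h 0) ⊆ h '' Set.Icc r0 0 :=
        intermediate_value_Icc hr0I.2 (hcont.mono (Set.Icc_subset_Icc hr0I.1 le_rfl))
      have : (0 : ℝ) ∈ Set.Icc (h r0) (h 0) := by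
        rw [h0]; exact ⟨hr0.le, zero_le_one⟩
      obtain ⟨z, hz, hz0⟩ := hsub this
      exact ⟨z, hz, by simpa using hz0⟩
    obtain ⟨hbIcc, hbz⟩ := hBcomp.sInf_mem hBne
    set b := sInf (Set.Icc r0 0 ∩ h ⁻¹' {0}) with hb_def
    have hbz' : h b = 0 := hbz
    have har0 : a < r0 := lt_of_le_of_ne haIcc.2 (fun he => by rw [he] at haz'; linarith)
    have hbr0 : r0 < b := lt_of_le_of_ne hbIcc.1 (fun he => by rw [← he] at hbz'; linarith)
    have haI : a ∈ Set.Icc (-s) 0 := ⟨haIcc.1, haIcc.2.trans hr0I.2⟩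
    have hbI : b ∈ Set.Icc (-s) 0 := ⟨hr0I.1.trans hbIcc.1, hbIcc.2⟩
    have hab : a ≤ b := (har0.trans hbr0).le
    have habsub : Set.Icc a b ⊆ Set.Icc (-s) 0 := Set.Icc_subset_Icc haI.1 hbI.2
    -- h ≤ 0 on [a, b]
    have hle : ∀ x ∈ Set.Icc a b, h x ≤ 0 := by
      intro x hx
      by_contra hpos
      push_neg at hpos
      rcases lt_or_ge x r0 with hxr | hxr
      · -- a zero in [x, r0] beats a
        have hxa : a < x := lt_of_le_of_ne hx.1 (fun he => by rw [← he] at hpos; linarith)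
        have hsub : Set.Icc (h r0) (h x) ⊆ h '' Set.Icc x r0 :=
          intermediate_value_Icc' hxr.le
            (hcont.mono (Set.Icc_subset_Icc (haI.1.trans hx.1) hr0I.2))
        have : (0 : ℝ) ∈ Set.Icc (h r0) (h x) := ⟨hr0.le, hpos.le⟩
        obtain ⟨z, hz, hz0⟩ := hsub this
        have hzA : z ∈ Set.Icc (-s) r0 ∩ h ⁻¹' {0} :=
          ⟨⟨haI.1.trans (hxa.le.trans hz.1), hz.2⟩, by simpa using hz0⟩
        have hza : z ≤ a := le_csSup hAcomp.bddAbove hzA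
        have : h z = 0 := by simpa using hz0
        linarith [hxa.trans_le hz.1, hza]
      · -- a zero in [r0, x] beats b
        have hr0x : r0 < x := lt_of_le_of_ne hxr (fun he => by rw [← he] at hpos; linarith)
        have hxb : x < b := lt_of_le_of_ne hx.2 (fun he => by rw [he] at hpos; linarith)
        have hsub : Set.Icc (h r0) (h x) ⊆ h '' Set.Icc r0 x :=
          intermediate_value_Icc hr0x.le
            (hcont.mono (Set.Icc_subset_Icc hr0I.1 (hx.2.trans hbI.2)))
        have : (0 : ℝ) ∈ Set.Icc (h r0) (h x) := ⟨hr0.le, hpos.le⟩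
        obtain ⟨z, hz, hz0⟩ := hsub this
        have hzB : z ∈ Set.Icc r0 0 ∩ h ⁻¹' {0} :=
          ⟨⟨hz.1, hz.2.trans (hx.2.trans hbI.2)⟩, by simpa using hz0⟩
        have hzb : b ≤ z := csInf_le hBcomp.bddBelow hzB
        linarith [hz.2.trans_lt hxb]
    -- h is concave on [a, b] since h'' ≤ 0 there
    have hconc : ConvexOn ℝ (Set.Icc a b) (fun x => -h x) := by
      apply convexOn_of_hasDerivWithinAt2_nonneg (f' := fun x => -h' x)
        (f'' := fun x => -h'' x) (convex_Icc a b)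
        ((hcont.mono habsub).neg)
      · intro x hx
        rw [interior_Icc] at hx ⊢
        exact ((hh x (habsub (Set.Ioo_subset_Icc_self hx))).neg).mono
          (Set.Ioo_subset_Icc_self.trans habsub)
      · intro x hx
        rw [interior_Icc] at hx ⊢
        exact ((hh' x (habsub (Set.Ioo_subset_Icc_self hx))).neg).mono
          (Set.Ioo_subset_Icc_self.trans habsub)
      · intro x hx
        rw [interior_Icc] at hx
        have hxI : x ∈ Set.Icc (-s) 0 := habsub (Set.Ioo_subset_Icc_self hx)
        have h2 := hderiv2 x hxI
        have hKx := hKneg x hxI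
        have hhx := hle x (Set.Ioo_subset_Icc_self hx)
        nlinarith
    -- concavity forces h r0 ≥ 0, contradiction
    have hr0ab : r0 ∈ Set.Icc a b := ⟨har0.le, hbr0.le⟩
    rw [← segment_eq_Icc hab] at hr0ab
    have := hconc.le_on_segment (Set.left_mem_Icc.2 hab) (Set.right_mem_Icc.2 hab) hr0ab
    simp only [haz', hbz', neg_zero, max_self] at this
    linarith
  -- Step 2: convexity of h on [-s, 0]
  have hcv : ConvexOn ℝ (Set.Icc (-s) 0) h := by
    apply convexOn_of_hasDerivWithinAt2_nonneg (f' := h') (f'' := h'')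
      (convex_Icc (-s) 0) hcont
    · intro x hx
      rw [interior_Icc] at hx ⊢
      exact (hh x (Set.Ioo_subset_Icc_self hx)).mono Set.Ioo_subset_Icc_self
    · intro x hx
      rw [interior_Icc] at hx ⊢
      exact (hh' x (Set.Ioo_subset_Icc_self hx)).mono Set.Ioo_subset_Icc_self
    · intro x hx
      rw [interior_Icc] at hx
      have hxI : x ∈ Set.Icc (-s) 0 := Set.Ioo_subset_Icc_self hx
      have h2 := hderiv2 x hxI
      have hKx := hKneg x hxI
      have hhx := hnonneg x hxI
      nlinarith
  -- Step 3: the pointwise bounds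
  have hbound : ∀ r ∈ Set.Icc (-s) 0, 0 ≤ h r ∧ h r ≤ 1 + r / s := by
    intro r hr
    refine ⟨hnonneg r hr, ?_⟩
    have h1 : 0 ≤ -r / s := by
      apply div_nonneg _ hs.le; linarith [hr.2]
    have h2 : 0 ≤ (r + s) / s := by
      apply div_nonneg _ hs.le; linarith [hr.1]
    have h3 : -r / s + (r + s) / s = 1 := by field_simp; ring
    have := hcv.2 hsI h0I h1 h2 h3
    have heval : (-r / s) • (-s) + ((r + s) / s) • (0 : ℝ) = r := by
      simp only [smul_eq_mul, mul_zero, add_zero]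
      field_simp
    rw [heval] at this
    rw [hend, h0] at this
    simp only [smul_eq_mul, mul_zero, mul_one, zero_add] at this
    calc h r ≤ (r + s) / s := this
      _ = 1 + r / s := by field_simp; ring
  refine ⟨hbound, ?_, ?_⟩
  -- derivative lower bound at -s
  · have hD : HasDerivWithinAt h (h' (-s)) (Set.Ioi (-s)) (-s) := by
      apply (hh (-s) hsI).mono_of_mem_nhdsWithin
      rw [mem_nhdsGT_iff_exists_Ioc_subset]
      exact ⟨0, Set.mem_Ioi.2 (by linarith), Set.Ioc_subset_Icc_self⟩
    have htend := (hasDerivWithinAt_iff_tendsto_slope' (Set.notMem_Ioi_self)).mp hD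
    refine ge_of_tendsto htend ?_
    filter_upwards [Ioc_mem_nhdsGT_of_mem (Set.mem_Ico.2 ⟨le_refl (-s), show (-s:ℝ) < 0 by linarith⟩)] with y hy
    rw [slope_def_field]
    have hyI : y ∈ Set.Icc (-s) 0 := ⟨hy.1.le, hy.2⟩
    have := hnonneg y hyI
    rw [hend]
    apply div_nonneg (by linarith)
    linarith [hy.1]
  -- derivative upper bound at -s
  · have := hcv.le_slope_of_hasDerivWithinAt hsI h0I (by linarith) (hh (-s) hsI)
    rw [slope_def_field, hend, h0] at this
    calc h' (-s) ≤ (1 - 0) / (0 - -s) := this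
      _ = 1 / s := by ring_nf
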